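/- The greedy solution value is a lower bound for the maxmin objective but may be strictly suboptimal: there exist nonnegative coefficient families A_i(t) such that Σ-free coupling via min_j makes the componentwise-greedy phases fail to maximize min_j Σ_{i,k} u[i,j,k]·A_i(t_i)[j,k]. Concretely, for M = 2 observers, N = 2 targets, L = 1 timestep, there exist functions A_1, A_2 : {0,1} → Fin 2 → ℝ with nonnegative values such that the pair of phases each maximizing its own cumulative information does not maximize the minimum over targets of total information. -/
import Mathlib


/-- Cumulative information of observer `i ∈ Fin 2` at phase `t ∈ Fin 2`:
the best single-target value `max_j A i t j` (M = 2 observers, N = 2 targets,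
L = 1 timestep, phases in the two-point set `Fin 2`). -/
noncomputable def cumInfo (A : Fin 2 → Fin 2 → Fin 2 → ℝ) (i t : Fin 2) : ℝ :=
  Finset.univ.sup' Finset.univ_nonempty (fun j : Fin 2 => A i t j)

/-- Maxmin value at phases `(t₁, t₂)`: maximum over target selections
`(j₁, j₂)` of the minimum over targets `j` of the total information
`∑_{i : jᵢ = j} A i tᵢ j` received by target `j`. -/
noncomputable def maxminVal (A : Fin 2 → Fin 2 → Fin 2 → ℝ) (t₁ t₂ : Fin 2) : ℝ :=
  Finset.univ.sup' Finset.univ_nonempty (fun p : Fin 2 × Fin 2 =>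
    Finset.univ.inf' Finset.univ_nonempty (fun j : Fin 2 =>
      (if p.1 = j then A 0 t₁ j else 0) + (if p.2 = j then A 1 t₂ j else 0)))

/-- There exist nonnegative coefficient families `A i t j` (observer
`i`, phase `t`, target `j`) such that some pair of phases, each maximizing its
own observer's cumulative information (greedy), fails to maximize the maxmin
objective: some other pair of phases achieves a strictly larger minimum-over-
targets total information. -/
theorem stmt_5 :
    ∃ A : Fin 2 → Fin 2 → Fin 2 → ℝ,
      (∀ i t j, 0 ≤ A i t j) ∧
      ∃ tg : Fin 2 → Fin 2,
        (∀ i t, cumInfo A i t ≤ cumInfo A i (tg i)) ∧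
        ∃ t₁ t₂ : Fin 2, maxminVal A (tg 0) (tg 1) < maxminVal A t₁ t₂ := by
  refine ⟨fun _ t j => if t = 0 then (if j = 0 then 2 else 0) else 1, ?_, fun _ => 0, ?_, 1, 1, ?_⟩
  · intro i t j
    fin_cases t <;> fin_cases j <;> norm_num
  · intro i t
    have h1 : cumInfo (fun _ t j => if t = 0 then (if j = 0 then 2 else 0) else 1) i t ≤ 2 := by
      apply Finset.sup'_le
      intro j _
      fin_cases t <;> fin_cases j <;> norm_num
    have h2 : (2:ℝ) ≤ cumInfo (fun _ t j => if t = 0 then (if j = 0 then 2 else 0) else 1) i 0 := by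
      have := Finset.le_sup' (fun j : Fin 2 =>
        (fun (_ : Fin 2) (t j : Fin 2) => if t = 0 then (if j = 0 then (2:ℝ) else 0) else 1) i 0 j)
        (Finset.mem_univ (0 : Fin 2))
      simpa [cumInfo] using this
    exact h1.trans h2
  · have h1 : maxminVal (fun _ t j => if t = 0 then (if j = 0 then 2 else 0) else 1) 0 0 ≤ 0 := by
      apply Finset.sup'_le
      intro p _
      calc Finset.univ.inf' Finset.univ_nonempty (fun j : Fin 2 =>
            (if p.1 = j then (if (0:Fin 2) = 0 then (if j = 0 then (2:ℝ) else 0) else 1) else 0) +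
            (if p.2 = j then (if (0:Fin 2) = 0 then (if j = 0 then (2:ℝ) else 0) else 1) else 0))
          ≤ _ := Finset.inf'_le _ (Finset.mem_univ (1 : Fin 2))
        _ ≤ 0 := by norm_num
    have h2 : (1:ℝ) ≤ maxminVal (fun _ t j => if t = 0 then (if j = 0 then 2 else 0) else 1) 1 1 := by
      calc (1:ℝ) ≤ Finset.univ.inf' Finset.univ_nonempty (fun j : Fin 2 =>
            (if ((0 : Fin 2), (1 : Fin 2)).1 = j then (if (1:Fin 2) = 0 then (if j = 0 then (2:ℝ) else 0) else 1) else 0) +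
            (if ((0 : Fin 2), (1 : Fin 2)).2 = j then (if (1:Fin 2) = 0 then (if j = 0 then (2:ℝ) else 0) else 1) else 0)) := by
            apply Finset.le_inf'
            intro j _
            fin_cases j <;> norm_num
        _ ≤ _ := by
            unfold maxminVal
            exact Finset.le_sup' (fun p : Fin 2 × Fin 2 =>
              Finset.univ.inf' Finset.univ_nonempty fun j : Fin 2 =>
                (if p.1 = j then if (1:Fin 2) = 0 then (if j = 0 then (2:ℝ) else 0) else 1 else 0) +
                if p.2 = j then if (1:Fin 2) = 0 then (if j = 0 then (2:ℝ) else 0) else 1 else 0)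
              (Finset.mem_univ ((0 : Fin 2), (1 : Fin 2)))
    calc maxminVal _ 0 0 ≤ 0 := h1
      _ < 1 := by norm_num
      _ ≤ _ := h2
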